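/- For every n ≥ 1, the level-n Hanoi Schreier graph Γ_n is connected and its diameter equals 2^n − 1. -/

import Mathlib

noncomputable section

/-- The generator `a_{(ij)}` of the Hanoi Towers group acting on finite ternary words:
`a_{(ij)}(iw) = jw`, `a_{(ij)}(jw) = iw`, and `a_{(ij)}(kw) = k·a_{(ij)}(w)` for
`k ∉ {i,j}`. -/
def hanoiMove (i j : Fin 3) : List (Fin 3) → List (Fin 3)
  | [] => []
  | x :: w => if x = i then j :: w else if x = j then i :: w else x :: hanoiMove i j w

/-- The level-`n` Hanoi Schreier graph `Γ_n`: vertices are ternary words of length `n`, and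
distinct `x, y` are adjacent iff `y ∈ {a(x), b(x), c(x)}` with `a = a_{(01)}`, `b = a_{(02)}`,
`c = a_{(12)}` (the relation is symmetrized; since the generators are involutions this is the
same relation). -/
def hanoiGraph (n : ℕ) : SimpleGraph (List.Vector (Fin 3) n) where
  Adj x y := x ≠ y ∧ ∃ s ∈ [hanoiMove 0 1, hanoiMove 0 2, hanoiMove 1 2],
    s x.toList = y.toList ∨ s y.toList = x.toList
  symm := ⟨by
    rintro x y ⟨h1, s, hs, h2⟩
    exact ⟨h1.symm, s, hs, h2.symm⟩⟩
  loopless := ⟨fun x h => h.1 rfl⟩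

namespace HanoiAux

/-- the third letter -/
def oth (a b : Fin 3) : Fin 3 :=
  if a = 0 then (if b = 1 then 2 else 1)
  else if a = 1 then (if b = 0 then 2 else 0)
  else (if b = 0 then 1 else 0)

lemma oth_ne_left (a b : Fin 3) : oth a b ≠ a := by revert a b; decide

lemma oth_ne_right (a b : Fin 3) : oth a b ≠ b := by revert a b; decide

lemma eq_oth {a i j : Fin 3} (hij : i ≠ j) (h1 : a ≠ i) (h2 : a ≠ j) : a = oth i j := by
  revert a i j; decide

lemma hm_length (i j : Fin 3) : ∀ l, (hanoiMove i j l).length = l.length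
  | [] => rfl
  | x :: w => by
    simp only [hanoiMove]
    split_ifs <;> simp [hm_length i j w]

lemma hm_comm (i j : Fin 3) : ∀ l, hanoiMove i j l = hanoiMove j i l
  | [] => rfl
  | x :: w => by
    by_cases hxi : x = i <;> by_cases hxj : x = j <;>
      simp_all [hanoiMove, hm_comm i j w]

lemma hm_invol (i j : Fin 3) (hij : i ≠ j) : ∀ l, hanoiMove i j (hanoiMove i j l) = l
  | [] => rfl
  | x :: w => by
    by_cases hxi : x = i
    · subst hxi; simp [hanoiMove, hij, hij.symm]
    · by_cases hxj : x = j
      · subst hxj; simp [hanoiMove, hij, hij.symm]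
      · simp [hanoiMove, hxi, hxj, hm_invol i j hij w]

lemma hm_fix (i j : Fin 3) : ∀ w : List (Fin 3), (∀ a ∈ w, a ≠ i ∧ a ≠ j) →
    hanoiMove i j w = w
  | [], _ => rfl
  | x :: w, h => by
    obtain ⟨h1, h2⟩ := h x (List.mem_cons_self)
    simp [hanoiMove, h1, h2, hm_fix i j w (fun a ha => h a (List.mem_cons_of_mem _ ha))]

lemma hm_single (i j t : Fin 3) :
    hanoiMove i j [t] = [if t = i then j else if t = j then i else t] := by
  simp only [hanoiMove]
  split_ifs <;> rfl

lemma hm_append_fix (i j t : Fin 3) : ∀ w : List (Fin 3), (∀ a ∈ w, a ≠ i ∧ a ≠ j) →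
    hanoiMove i j (w ++ [t]) = w ++ hanoiMove i j [t]
  | [], _ => rfl
  | x :: w, h => by
    obtain ⟨h1, h2⟩ := h x (List.mem_cons_self)
    simp [hanoiMove, h1, h2, hm_append_fix i j t w (fun a ha => h a (List.mem_cons_of_mem _ ha))]

lemma hm_last (i j t : Fin 3) : ∀ w : List (Fin 3),
    hanoiMove i j (w ++ [t]) = hanoiMove i j w ++ [t] ∨
      ((∀ a ∈ w, a ≠ i ∧ a ≠ j) ∧
        hanoiMove i j (w ++ [t]) = w ++ [if t = i then j else if t = j then i else t])
  | [] => by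
    right
    refine ⟨by simp, ?_⟩
    simp only [List.nil_append, hanoiMove]
    split_ifs <;> rfl
  | x :: w => by
    by_cases hxi : x = i
    · left; subst hxi; simp [hanoiMove]
    · by_cases hxj : x = j
      · left; subst hxj; simp [hanoiMove, hxi]
      · rcases hm_last i j t w with h | ⟨h1, h2⟩
        · left; simp [hanoiMove, hxi, hxj, h]
        · right
          refine ⟨?_, ?_⟩
          · intro a ha
            rcases List.mem_cons.mp ha with rfl | ha
            · exact ⟨hxi, hxj⟩
            · exact h1 a ha
          · simp [hanoiMove, hxi, hxj, h2]



/-- distance-to-perfect-state potential, big-endian (head = largest disc) -/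
def G : Fin 3 → List (Fin 3) → ℕ
  | _, [] => 0
  | t, x :: r => if x = t then G t r else 2 ^ r.length + G (oth x t) r

lemma G_replicate (m : ℕ) (k t : Fin 3) :
    G t (List.replicate m k) = if t = k then 0 else 2 ^ m - 1 := by
  induction m generalizing t with
  | zero => simp [G, List.replicate]
  | succ m ih =>
    rw [List.replicate_succ]
    by_cases h : t = k
    · subst h; simp [G, ih]
    · have hk : ¬ (k = t) := fun e => h e.symm
      have h2 : oth k t ≠ k := oth_ne_left k t
      have hpow : 1 ≤ 2 ^ m := Nat.one_le_two_pow
      simp only [G, if_neg hk, List.length_replicate, ih, if_neg h2, if_neg h]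
      rw [pow_succ]
      omega

lemma G_cons_replicate (m : ℕ) (k t x : Fin 3) :
    G t (x :: List.replicate m k) =
      if x = t then (if t = k then 0 else 2 ^ m - 1)
      else 2 ^ m + (if oth x t = k then 0 else 2 ^ m - 1) := by
  simp [G, G_replicate]

lemma main_ineq (i j t t₀ : Fin 3) (P : ℕ) (hP : 1 ≤ P) :
    (if (if t₀ = i then j else if t₀ = j then i else t₀) = t then (if t = oth i j then 0 else P - 1)
      else P + (if oth (if t₀ = i then j else if t₀ = j then i else t₀) t = oth i j then 0 else P - 1)) ≤
    (if t₀ = t then (if t = oth i j then 0 else P - 1)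
      else P + (if oth t₀ t = oth i j then 0 else P - 1)) + 1 := by
  fin_cases i <;> fin_cases j <;> fin_cases t <;> fin_cases t₀ <;>
    simp [oth] <;> omega

lemma G_lip (i j : Fin 3) (hij : i ≠ j) (l : List (Fin 3)) (t : Fin 3) :
    G t (hanoiMove i j l).reverse ≤ G t l.reverse + 1 := by
  induction l using List.reverseRecOn generalizing t with
  | nil => simp [hanoiMove, G]
  | append_singleton w t₀ ih =>
    rcases hm_last i j t₀ w with h | ⟨hall, h⟩
    · rw [h]
      simp only [List.reverse_append, List.reverse_cons, List.reverse_nil, List.nil_append,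
        List.singleton_append]
      by_cases ht : t₀ = t
      · simp only [G, if_pos ht]
        exact ih t
      · simp only [G, if_neg ht, List.length_reverse, hm_length]
        have := ih (oth t₀ t)
        omega
    · rw [h]
      have hw : w = List.replicate w.length (oth i j) :=
        List.eq_replicate_of_mem (fun a ha => eq_oth hij (hall a ha).1 (hall a ha).2)
      simp only [List.reverse_append, List.reverse_cons, List.reverse_nil, List.nil_append,
        List.singleton_append]
      rw [show w.reverse = List.replicate w.length (oth i j) by
        rw [hw]; simp [List.reverse_replicate]]
      rw [G_cons_replicate, G_cons_replicate]
      exact main_ineq i j t t₀ (2 ^ w.length) Nat.one_le_two_pow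



open SimpleGraph

abbrev V3 (n : ℕ) := List.Vector (Fin 3) n

def perfectV (m : ℕ) (j : Fin 3) : V3 m := ⟨List.replicate m j, List.length_replicate (n := m) (a := j)⟩

def snocV {m : ℕ} (v : V3 m) (t : Fin 3) : V3 (m + 1) :=
  @HAppend.hAppend (List.Vector (Fin 3) m) (List.Vector (Fin 3) 1) (List.Vector (Fin 3) (m + 1)) _
    v ⟨[t], rfl⟩

lemma snocV_toList {m : ℕ} (v : V3 m) (t : Fin 3) :
    (snocV v t).toList = v.toList ++ [t] :=
  List.Vector.toList_append v _

lemma toList_inj {m : ℕ} {x y : V3 m} (h : x.toList = y.toList) : x = y :=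
  Subtype.ext h

lemma snocV_inj {m : ℕ} {x y : V3 m} {t : Fin 3} (h : snocV x t = snocV y t) : x = y := by
  apply toList_inj
  have h2 := congrArg (fun v : V3 (m+1) => v.toList.dropLast) h
  simpa [snocV_toList, List.dropLast_concat] using h2

lemma snocV_last {m : ℕ} {x y : V3 m} {t u : Fin 3} (h : snocV x t = snocV y u) : t = u := by
  have h2 := congrArg (fun v : V3 (m+1) => v.toList.getLast?) h
  simpa [snocV_toList, List.getLast?_concat] using h2

lemma exists_snoc {m : ℕ} (x : V3 (m + 1)) : ∃ (w : V3 m) (t : Fin 3), x = snocV w t := by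
  obtain ⟨l, hl⟩ := x
  have hne : l ≠ [] := by intro h; subst h; simp at hl
  refine ⟨⟨l.dropLast, by simp [hl]⟩, l.getLast hne, ?_⟩
  apply toList_inj
  exact (List.dropLast_append_getLast hne).symm.trans
    (snocV_toList (⟨l.dropLast, by simp [hl]⟩ : V3 m) (l.getLast hne)).symm

lemma perfect_snoc (m : ℕ) (j : Fin 3) : perfectV (m + 1) j = snocV (perfectV m j) j := by
  apply toList_inj
  rw [snocV_toList]
  simp [perfectV, List.replicate_succ']

lemma adj_norm {n : ℕ} {x y : V3 n} (h : (hanoiGraph n).Adj x y) :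
    ∃ i j : Fin 3, i ≠ j ∧ hanoiMove i j x.toList = y.toList := by
  obtain ⟨hne, s, hs, hc⟩ := h
  have key : ∀ i j : Fin 3, i ≠ j → s = hanoiMove i j →
      ∃ i j : Fin 3, i ≠ j ∧ hanoiMove i j x.toList = y.toList := by
    rintro i j hij rfl
    rcases hc with h | h
    · exact ⟨i, j, hij, h⟩
    · exact ⟨i, j, hij, by rw [← h, hm_invol i j hij]⟩
  simp only [List.mem_cons, List.not_mem_nil, or_false] at hs
  rcases hs with rfl | rfl | rfl
  · exact key 0 1 (by decide) rfl
  · exact key 0 2 (by decide) rfl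
  · exact key 1 2 (by decide) rfl

lemma mem_gens (i j : Fin 3) (hij : i ≠ j) :
    hanoiMove i j ∈ [hanoiMove 0 1, hanoiMove 0 2, hanoiMove 1 2] := by
  have e : ∀ a b : Fin 3, hanoiMove a b = hanoiMove b a := fun a b => funext (hm_comm a b)
  fin_cases i <;> fin_cases j <;> simp only [List.mem_cons, List.not_mem_nil, or_false] <;>
    first
      | exact absurd rfl hij
      | exact Or.inl rfl
      | exact Or.inr (Or.inl rfl)
      | exact Or.inr (Or.inr rfl)
      | exact Or.inl (e _ _)
      | exact Or.inr (Or.inl (e _ _))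
      | exact Or.inr (Or.inr (e _ _))

lemma adj_mk {n : ℕ} {x y : V3 n} (i j : Fin 3) (hij : i ≠ j)
    (hmv : hanoiMove i j x.toList = y.toList) (hne : x ≠ y) : (hanoiGraph n).Adj x y :=
  ⟨hne, hanoiMove i j, mem_gens i j hij, Or.inl hmv⟩

lemma adj_snoc {m : ℕ} (t : Fin 3) {x y : V3 m} (h : (hanoiGraph m).Adj x y) :
    (hanoiGraph (m + 1)).Adj (snocV x t) (snocV y t) := by
  obtain ⟨i, j, hij, hmv⟩ := adj_norm h
  have hne : x.toList ≠ y.toList := fun e => h.ne (toList_inj e)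
  have hmm : hanoiMove i j x.toList ≠ x.toList := by rw [hmv]; exact fun e => hne e.symm
  have hmain : hanoiMove i j (x.toList ++ [t]) = y.toList ++ [t] := by
    rcases hm_last i j t x.toList with hl | ⟨hall, _⟩
    · rw [hl, hmv]
    · exact absurd (hm_fix i j _ hall) hmm
  refine adj_mk i j hij ?_ ?_
  · rw [snocV_toList, snocV_toList, hmain]
  · exact fun e => h.ne (snocV_inj e)

@[reducible]
def snocHom (m : ℕ) (t : Fin 3) : hanoiGraph m →g hanoiGraph (m + 1) where
  toFun v := snocV v t
  map_rel' h := adj_snoc t h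

lemma pow_arith (m : ℕ) : 2 ^ m - 1 + 1 + (2 ^ m - 1) = 2 ^ (m + 1) - 1 ∧
    2 ^ m - 1 ≤ 2 ^ (m + 1) - 1 := by
  have h1 : 1 ≤ 2 ^ m := Nat.one_le_two_pow
  have h2 : 2 ^ (m + 1) = 2 * 2 ^ m := by rw [pow_succ]; ring
  omega

lemma walkA : ∀ (m : ℕ) (x : V3 m) (j : Fin 3),
    ∃ p : (hanoiGraph m).Walk x (perfectV m j), p.length ≤ 2 ^ m - 1 := by
  intro m
  induction m with
  | zero =>
    intro x j
    have hx : x = perfectV 0 j := toList_inj (by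
      have h1 := x.2
      have h2 : x.toList.length = 0 := h1
      simp [perfectV, List.length_eq_zero_iff.mp h2])
    subst hx
    exact ⟨Walk.nil, by simp⟩
  | succ m ih =>
    intro x j
    obtain ⟨w, t, rfl⟩ := exists_snoc x
    by_cases htj : t = j
    · subst htj
      obtain ⟨p, hp⟩ := ih w t
      refine ⟨(p.map (snocHom m t)).copy rfl (perfect_snoc m t).symm, ?_⟩
      rw [Walk.length_copy, Walk.length_map]
      exact hp.trans (pow_arith m).2
    · set k := oth t j with hk
      obtain ⟨p1, hp1⟩ := ih w k
      obtain ⟨p2, hp2⟩ := ih (perfectV m k) j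
      have e : (hanoiGraph (m + 1)).Adj (snocV (perfectV m k) t) (snocV (perfectV m k) j) := by
        refine adj_mk t j htj ?_ ?_
        · rw [snocV_toList, snocV_toList]
          have hall : ∀ a ∈ (perfectV m k).toList, a ≠ t ∧ a ≠ j := by
            intro a ha
            have : a = k := List.eq_of_mem_replicate ha
            subst this
            exact ⟨hk ▸ oth_ne_left t j, hk ▸ oth_ne_right t j⟩
          rw [hm_append_fix t j t _ hall, hm_single]
          simp
        · exact fun e => htj (snocV_last e)
      refine ⟨((p1.map (snocHom m t)).append
        (Walk.cons e (p2.map (snocHom m j)))).copy rfl (perfect_snoc m j).symm, ?_⟩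
      rw [Walk.length_copy, Walk.length_append, Walk.length_cons, Walk.length_map,
        Walk.length_map]
      have := (pow_arith m).1
      omega

lemma walkB : ∀ (m : ℕ) (x y : V3 m),
    ∃ p : (hanoiGraph m).Walk x y, p.length ≤ 2 ^ m - 1 := by
  intro m
  induction m with
  | zero =>
    intro x y
    have hx : x = y := toList_inj (by
      have h1 : x.toList.length = 0 := x.2
      have h2 : y.toList.length = 0 := y.2
      rw [List.length_eq_zero_iff.mp h1, List.length_eq_zero_iff.mp h2])
    subst hx
    exact ⟨Walk.nil, by simp⟩
  | succ m ih =>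
    intro x y
    obtain ⟨w, t, rfl⟩ := exists_snoc x
    obtain ⟨v, u, rfl⟩ := exists_snoc y
    by_cases htu : t = u
    · subst htu
      obtain ⟨p, hp⟩ := ih w v
      refine ⟨p.map (snocHom m t), ?_⟩
      rw [Walk.length_map]
      exact hp.trans (pow_arith m).2
    · set k := oth t u with hk
      obtain ⟨p1, hp1⟩ := walkA m w k
      obtain ⟨p2, hp2⟩ := walkA m v k
      have e : (hanoiGraph (m + 1)).Adj (snocV (perfectV m k) t) (snocV (perfectV m k) u) := by
        refine adj_mk t u htu ?_ ?_
        · rw [snocV_toList, snocV_toList]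
          have hall : ∀ a ∈ (perfectV m k).toList, a ≠ t ∧ a ≠ u := by
            intro a ha
            have : a = k := List.eq_of_mem_replicate ha
            subst this
            exact ⟨hk ▸ oth_ne_left t u, hk ▸ oth_ne_right t u⟩
          rw [hm_append_fix t u t _ hall, hm_single]
          simp
        · exact fun e => htu (snocV_last e)
      refine ⟨(p1.map (snocHom m t)).append
        (Walk.cons e ((p2.map (snocHom m u)).reverse)), ?_⟩
      rw [Walk.length_append, Walk.length_cons, Walk.length_reverse, Walk.length_map,
        Walk.length_map]
      have := (pow_arith m).1
      omega

lemma adj_lip {n : ℕ} {x y : V3 n} (h : (hanoiGraph n).Adj x y) (t : Fin 3) :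
    G t y.toList.reverse ≤ G t x.toList.reverse + 1 := by
  obtain ⟨i, j, hij, hmv⟩ := adj_norm h
  rw [← hmv]
  exact G_lip i j hij x.toList t

lemma walk_bound {n : ℕ} (t : Fin 3) {x y : V3 n} (p : (hanoiGraph n).Walk x y) :
    G t y.toList.reverse ≤ G t x.toList.reverse + p.length := by
  induction p with
  | nil => simp
  | cons h p ih =>
    have h1 := adj_lip h t
    rw [Walk.length_cons]
    omega

end HanoiAux


open HanoiAux SimpleGraph

/-- for every `n ≥ 1` the level-`n` Hanoi Schreier graph `Γ_n` is connected and
has diameter `2^n − 1`. -/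
theorem statement_12 (n : ℕ) (hn : 1 ≤ n) :
    (hanoiGraph n).Connected ∧
      Finset.univ.sup
          (fun pq : List.Vector (Fin 3) n × List.Vector (Fin 3) n =>
            (hanoiGraph n).dist pq.1 pq.2) = 2 ^ n - 1 := by
  have hconn : (hanoiGraph n).Connected := by
    have hne : Nonempty (List.Vector (Fin 3) n) := ⟨perfectV n 0⟩
    apply SimpleGraph.Connected.mk
    intro x y
    obtain ⟨p, _⟩ := walkB n x y
    exact ⟨p⟩
  refine ⟨hconn, le_antisymm ?_ ?_⟩
  · apply Finset.sup_le
    intro pq _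
    obtain ⟨p, hp⟩ := walkB n pq.1 pq.2
    exact (SimpleGraph.dist_le p).trans hp
  · have hle : 2 ^ n - 1 ≤ (hanoiGraph n).dist (perfectV n 0) (perfectV n 1) := by
      obtain ⟨p, hp⟩ := (hconn (perfectV n 0) (perfectV n 1)).exists_walk_length_eq_dist
      have hb := walk_bound (0 : Fin 3) p
      have h0 : G (0 : Fin 3) ((perfectV n 0).toList).reverse = 0 := by
        simp [perfectV, List.reverse_replicate, G_replicate]
      have h1 : G (0 : Fin 3) ((perfectV n 1).toList).reverse = 2 ^ n - 1 := by
        simp [perfectV, List.reverse_replicate, G_replicate]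
      rw [h0, h1, hp] at hb
      omega
    exact hle.trans (Finset.le_sup (f := fun pq : List.Vector (Fin 3) n × List.Vector (Fin 3) n =>
      (hanoiGraph n).dist pq.1 pq.2) (Finset.mem_univ (perfectV n 0, perfectV n 1)))
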